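/- arXiv:1909.01977 — 6 statements merged into one kernel-verified Lean document; each statement's English description precedes it below -/
import Mathlib

section
/- Let A be an n×n real matrix that is strictly diagonally dominant with negative diagonal entries, decomposed as A = L + D + U where L is the strictly lower triangular part, D the diagonal, and U the strictly upper triangular part. Then for every Δt > 0, the matrix C = (I − Δt·L − Δt·D)^{-1}(I + Δt·U) has spectral radius strictly less than 1. -/
theorem sdc1_spectral_radius_lt_one
    (n : ℕ) (A : Matrix (Fin n) (Fin n) ℝ)
    (hdiag : ∀ i, A i i < 0)
    (hdom : ∀ i, ∑ j ∈ Finset.univ.filter (fun j => j ≠ i), |A i j| < |A i i|)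
    (L D U : Matrix (Fin n) (Fin n) ℝ)
    (hL : ∀ i j, L i j = if (j : ℕ) < (i : ℕ) then A i j else 0)
    (hD : ∀ i j, D i j = if j = i then A i j else 0)
    (hU : ∀ i j, U i j = if (i : ℕ) < (j : ℕ) then A i j else 0)
    (Δt : ℝ) (hΔt : 0 < Δt) :
    ∀ μ ∈ spectrum ℂ
      (((((1 : Matrix (Fin n) (Fin n) ℝ) - Δt • L - Δt • D)⁻¹ *
        ((1 : Matrix (Fin n) (Fin n) ℝ) + Δt • U)).map (fun x : ℝ => (x : ℂ)))),
      ‖μ‖ < 1 := by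
  intro μ hμ
  by_contra hcon
  push_neg at hcon
  set M : Matrix (Fin n) (Fin n) ℝ := 1 - Δt • L - Δt • D with hM
  set N : Matrix (Fin n) (Fin n) ℝ := 1 + Δt • U with hN
  have hMe : ∀ i j, M i j =
      (if i = j then (1 : ℝ) else 0) - Δt * L i j - Δt * D i j := by
    intro i j
    simp [hM, Matrix.sub_apply, Matrix.one_apply, Matrix.smul_apply, smul_eq_mul]
  have hNe : ∀ i j, N i j = (if i = j then (1 : ℝ) else 0) + Δt * U i j := by
    intro i j
    simp [hN, Matrix.add_apply, Matrix.one_apply, Matrix.smul_apply, smul_eq_mul]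
  have hMdiag : ∀ i, M i i = 1 - Δt * A i i := by
    intro i
    rw [hMe i i, hL, hD]
    simp
  have hMdiagpos : ∀ i, 0 < M i i := by
    intro i
    rw [hMdiag i]
    nlinarith [hdiag i]
  -- M is lower triangular
  have hMtri : M.BlockTriangular OrderDual.toDual := by
    intro i j hij
    have hij' : (i : ℕ) < (j : ℕ) := hij
    have hne : (i : ℕ) ≠ (j : ℕ) := Nat.ne_of_lt hij'
    rw [hMe i j, hL, hD,
      if_neg (fun h => hne (congrArg Fin.val h)),
      if_neg (by omega : ¬ (j : ℕ) < (i : ℕ)),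
      if_neg (fun h => hne (congrArg Fin.val h).symm)]
    ring
  have hMdet : M.det ≠ 0 := by
    rw [Matrix.det_of_lowerTriangular M hMtri]
    exact Finset.prod_ne_zero_iff.mpr fun i _ => (hMdiagpos i).ne'
  have hMinv : IsUnit M.det := isUnit_iff_ne_zero.mpr hMdet
  -- complex versions
  set f : ℝ →+* ℂ := Complex.ofRealHom with hf
  set Mc : Matrix (Fin n) (Fin n) ℂ := M.map f with hMc
  set Nc : Matrix (Fin n) (Fin n) ℂ := N.map f with hNc
  set Cc : Matrix (Fin n) (Fin n) ℂ := (M⁻¹ * N).map (fun x : ℝ => (x : ℂ)) with hCc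
  have hmapf : Cc = (M⁻¹ * N).map f := rfl
  have hMcCc : Mc * Cc = Nc := by
    rw [hmapf, hMc, hNc, ← Matrix.map_mul, ← mul_assoc, Matrix.mul_nonsing_inv M hMinv,
      one_mul]
  -- from spectrum: det (μ • 1 - Cc) = 0
  have hdet0 : (μ • (1 : Matrix (Fin n) (Fin n) ℂ) - Cc).det = 0 := by
    have h1 := spectrum.mem_iff.mp hμ
    rw [Algebra.algebraMap_eq_smul_one] at h1
    by_contra hne
    exact h1 ((Matrix.isUnit_iff_isUnit_det _).mpr (isUnit_iff_ne_zero.mpr hne))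
  set T : Matrix (Fin n) (Fin n) ℂ := μ • Mc - Nc with hT
  have hTfact : T = Mc * (μ • (1 : Matrix (Fin n) (Fin n) ℂ) - Cc) := by
    rw [hT, mul_sub, hMcCc, Matrix.mul_smul, mul_one]
  have hTdet : T.det = 0 := by
    rw [hTfact, Matrix.det_mul, hdet0, mul_zero]
  -- T is strictly diagonally dominant, contradiction
  have hTentry : ∀ i j, T i j = μ * (M i j : ℂ) - (N i j : ℂ) := by
    intro i j
    simp [hT, hMc, hNc, Matrix.sub_apply, Matrix.smul_apply, Matrix.map_apply,
      smul_eq_mul, hf]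
  have hμpos : (0 : ℝ) < ‖μ‖ := lt_of_lt_of_le one_pos hcon
  have hdd : ∀ k, ∑ j ∈ Finset.univ.erase k, ‖T k j‖ < ‖T k k‖ := by
    intro i
    have hbound : ∀ j ∈ Finset.univ.erase i, ‖T i j‖ ≤ ‖μ‖ * Δt * |A i j| := by
      intro j hj
      have hji : j ≠ i := Finset.ne_of_mem_erase hj
      have hji' : (j : ℕ) ≠ (i : ℕ) := fun h => hji (Fin.ext h)
      rw [hTentry i j, hMe i j, hNe i j, if_neg (fun h => hji h.symm), hL, hD, hU,
        if_neg hji]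
      rcases lt_or_gt_of_ne hji' with h | h
      · -- j < i : lower part
        rw [if_pos h, if_neg (by omega)]
        have : μ * (((0:ℝ) - Δt * A i j - Δt * 0 : ℝ) : ℂ) - (((0:ℝ) + Δt * 0 : ℝ) : ℂ)
            = -(μ * ((Δt * A i j : ℝ) : ℂ)) := by push_cast; ring
        rw [this, norm_neg, norm_mul, Complex.norm_real, Real.norm_eq_abs, abs_mul,
          abs_of_pos hΔt, mul_assoc]
      · -- i < j : upper part
        rw [if_neg (by omega), if_pos h]
        have : μ * (((0:ℝ) - Δt * 0 - Δt * 0 : ℝ) : ℂ) - (((0:ℝ) + Δt * A i j : ℝ) : ℂ)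
            = -(((Δt * A i j : ℝ) : ℂ)) := by push_cast; ring
        rw [this, norm_neg, Complex.norm_real, Real.norm_eq_abs, abs_mul,
          abs_of_pos hΔt]
        nlinarith [mul_nonneg hΔt.le (abs_nonneg (A i j)), hcon]
    have hsum : ∑ j ∈ Finset.univ.erase i, ‖T i j‖
        ≤ ‖μ‖ * Δt * ∑ j ∈ Finset.univ.erase i, |A i j| := by
      rw [Finset.mul_sum]
      exact Finset.sum_le_sum hbound
    have herase : (Finset.univ.erase i : Finset (Fin n))
        = Finset.univ.filter (fun j => j ≠ i) := by
      ext j; simp [Finset.mem_erase, and_comm]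
    have hdom' : ∑ j ∈ Finset.univ.erase i, |A i j| < |A i i| := by
      rw [herase]; exact hdom i
    have hstep : ‖μ‖ * Δt * ∑ j ∈ Finset.univ.erase i, |A i j|
        < ‖μ‖ * Δt * |A i i| :=
      mul_lt_mul_of_pos_left hdom' (by positivity)
    have habs : |A i i| = -(A i i) := abs_of_neg (hdiag i)
    have hTii : ‖T i i‖ ≥ ‖μ‖ * (1 - Δt * A i i) - 1 := by
      have : T i i = μ * ((1 - Δt * A i i : ℝ) : ℂ) - 1 := by
        rw [hTentry i i, hMdiag i, hNe i i, hU, if_pos rfl, if_neg (lt_irrefl (i : ℕ))]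
        push_cast; ring
      rw [this]
      calc ‖μ * ((1 - Δt * A i i : ℝ) : ℂ) - 1‖
          ≥ ‖μ * ((1 - Δt * A i i : ℝ) : ℂ)‖ - ‖(1 : ℂ)‖ := norm_sub_norm_le _ _
        _ = ‖μ‖ * (1 - Δt * A i i) - 1 := by
            rw [norm_mul, Complex.norm_real, Real.norm_eq_abs, norm_one,
              abs_of_pos (by nlinarith [hdiag i])]
    calc ∑ j ∈ Finset.univ.erase i, ‖T i j‖
        ≤ ‖μ‖ * Δt * ∑ j ∈ Finset.univ.erase i, |A i j| := hsum
      _ < ‖μ‖ * Δt * |A i i| := hstep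
      _ = ‖μ‖ * (1 - Δt * A i i) - ‖μ‖ := by rw [habs]; ring
      _ ≤ ‖μ‖ * (1 - Δt * A i i) - 1 := by linarith
      _ ≤ ‖T i i‖ := hTii
  exact (det_ne_zero_of_sum_row_lt_diag hdd) hTdet
end

section
/- Let A be an n×n real matrix that is strictly diagonally dominant with negative diagonal entries, A = L + D + U (strict lower, diagonal, strict upper parts). If λ ∈ ℂ with |λ| ≥ 1 and x ∈ ℂⁿ is a nonzero vector with (I + Δt·U)x = λ(I − Δt·L − Δt·D)x for some Δt > 0, then choosing i with |x_i| maximal, we have 1 + Δt·Σ_{j>i}|a_ij|·|x_j|/|x_i| + Δt·|λ|·Σ_{j<i}|a_ij|·|x_j|/|x_i| ≥ |λ|·|1 − Δt·a_ii|, which leads to a contradiction; hence no eigenvalue of (I − Δt·L − Δt·D)^{-1}(I + Δt·U) has modulus ≥ 1. -/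
theorem sdc1_no_eigenvalue_of_modulus_ge_one
    (n : ℕ) (A : Matrix (Fin n) (Fin n) ℝ)
    (hdiag : ∀ i, A i i < 0)
    (hdom : ∀ i, ∑ j ∈ Finset.univ.filter (fun j => j ≠ i), |A i j| < |A i i|)
    (L D U : Matrix (Fin n) (Fin n) ℝ)
    (hL : ∀ i j, L i j = if (j : ℕ) < (i : ℕ) then A i j else 0)
    (hD : ∀ i j, D i j = if j = i then A i j else 0)
    (hU : ∀ i j, U i j = if (i : ℕ) < (j : ℕ) then A i j else 0)
    (Δt : ℝ) (hΔt : 0 < Δt)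
    (lam : ℂ) (hlam : 1 ≤ ‖lam‖)
    (x : Fin n → ℂ) (hx : x ≠ 0)
    (heig : (((1 : Matrix (Fin n) (Fin n) ℝ) + Δt • U).map (fun a : ℝ => (a : ℂ))).mulVec x
      = lam • ((((1 : Matrix (Fin n) (Fin n) ℝ) - Δt • L - Δt • D).map
          (fun a : ℝ => (a : ℂ))).mulVec x)) :
    False := by
  have hne : (Finset.univ : Finset (Fin n)).Nonempty := by
    rcases Function.ne_iff.1 hx with ⟨i, _⟩
    exact ⟨i, Finset.mem_univ i⟩
  obtain ⟨i, -, hi⟩ := Finset.exists_max_image Finset.univ (fun j => ‖x j‖) hne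
  have hxi : 0 < ‖x i‖ := by
    rcases Function.ne_iff.1 hx with ⟨k, hk⟩
    have : 0 < ‖x k‖ := by simpa [norm_pos_iff] using hk
    exact lt_of_lt_of_le this (hi k (Finset.mem_univ k))
  have hmax : ∀ j, ‖x j‖ ≤ ‖x i‖ := fun j => hi j (Finset.mem_univ j)
  have key := congrFun heig i
  simp only [Matrix.mulVec, dotProduct, Matrix.map_apply, Matrix.add_apply,
    Matrix.sub_apply, Matrix.smul_apply, Matrix.one_apply, Pi.smul_apply, smul_eq_mul,
    hL, hD, hU] at key
  set Su := Finset.univ.filter (fun j : Fin n => (i:ℕ) < (j:ℕ)) with hSu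
  set Sl := Finset.univ.filter (fun j : Fin n => (j:ℕ) < (i:ℕ)) with hSl
  have e1 : (∑ j : Fin n, (((if i = j then (1:ℝ) else 0) + Δt * if (i:ℕ) < (j:ℕ) then A i j else 0 : ℝ) : ℂ) * x j)
      = x i + (Δt:ℂ) * ∑ j ∈ Su, (A i j : ℂ) * x j := by
    have hterm : ∀ j : Fin n, (((if i = j then (1:ℝ) else 0) + Δt * if (i:ℕ) < (j:ℕ) then A i j else 0 : ℝ) : ℂ) * x j
        = (if i = j then x j else 0) + (if (i:ℕ) < (j:ℕ) then (Δt:ℂ) * (A i j : ℂ) * x j else 0) := by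
      intro j; split_ifs <;> push_cast <;> ring
    rw [Finset.sum_congr rfl (fun j _ => hterm j), Finset.sum_add_distrib,
      Finset.sum_ite_eq, Finset.mul_sum, hSu, Finset.sum_filter]
    simp [mul_assoc]
  have e2 : (∑ j : Fin n, ((((if i = j then (1:ℝ) else 0) - Δt * if (j:ℕ) < (i:ℕ) then A i j else 0) - Δt * if j = i then A i j else 0 : ℝ) : ℂ) * x j)
      = x i - (Δt:ℂ) * ∑ j ∈ Sl, (A i j : ℂ) * x j - (Δt:ℂ) * (A i i : ℂ) * x i := by
    have hterm : ∀ j : Fin n, ((((if i = j then (1:ℝ) else 0) - Δt * if (j:ℕ) < (i:ℕ) then A i j else 0) - Δt * if j = i then A i j else 0 : ℝ) : ℂ) * x j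
        = ((if i = j then x j else 0) - (if (j:ℕ) < (i:ℕ) then (Δt:ℂ) * (A i j : ℂ) * x j else 0)) - (if j = i then (Δt:ℂ) * (A i j : ℂ) * x j else 0) := by
      intro j; split_ifs <;> push_cast <;> ring
    rw [Finset.sum_congr rfl (fun j _ => hterm j), Finset.sum_sub_distrib,
      Finset.sum_sub_distrib, Finset.sum_ite_eq, Finset.sum_ite_eq',
      Finset.mul_sum, hSl, Finset.sum_filter]
    simp [mul_assoc]
  rw [e1, e2] at key
  have hmain : lam * ((1:ℂ) - (Δt:ℂ) * (A i i : ℂ)) * x i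
      = x i + (Δt:ℂ) * ∑ j ∈ Su, (A i j : ℂ) * x j
        + lam * ((Δt:ℂ) * ∑ j ∈ Sl, (A i j : ℂ) * x j) := by
    linear_combination -key
  -- norms
  have hnorm1 : ‖(1:ℂ) - (Δt:ℂ) * (A i i : ℂ)‖ = 1 + Δt * |A i i| := by
    have h1 : ((1 - Δt * A i i : ℝ) : ℂ) = (1:ℂ) - (Δt:ℂ) * (A i i : ℂ) := by push_cast; ring
    rw [← h1, Complex.norm_real, Real.norm_eq_abs,
      abs_of_pos (by nlinarith [hdiag i] : (0:ℝ) < 1 - Δt * A i i), abs_of_neg (hdiag i)]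
    ring
  have hbound : ∀ (s : Finset (Fin n)), ‖∑ j ∈ s, (A i j : ℂ) * x j‖ ≤ (∑ j ∈ s, |A i j|) * ‖x i‖ := by
    intro s
    calc ‖∑ j ∈ s, (A i j : ℂ) * x j‖ ≤ ∑ j ∈ s, ‖(A i j : ℂ) * x j‖ := norm_sum_le _ _
      _ ≤ ∑ j ∈ s, |A i j| * ‖x i‖ := by
          apply Finset.sum_le_sum
          intro j _
          rw [norm_mul, Complex.norm_real, Real.norm_eq_abs]
          exact mul_le_mul_of_nonneg_left (hmax j) (abs_nonneg _)
      _ = (∑ j ∈ s, |A i j|) * ‖x i‖ := by rw [Finset.sum_mul]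
  have hineq : ‖lam‖ * (1 + Δt * |A i i|) * ‖x i‖
      ≤ ‖x i‖ + Δt * (∑ j ∈ Su, |A i j|) * ‖x i‖ + ‖lam‖ * (Δt * (∑ j ∈ Sl, |A i j|) * ‖x i‖) := by
    calc ‖lam‖ * (1 + Δt * |A i i|) * ‖x i‖
        = ‖lam * ((1:ℂ) - (Δt:ℂ) * (A i i : ℂ)) * x i‖ := by
          rw [norm_mul, norm_mul, hnorm1]
      _ = ‖x i + (Δt:ℂ) * ∑ j ∈ Su, (A i j : ℂ) * x j
            + lam * ((Δt:ℂ) * ∑ j ∈ Sl, (A i j : ℂ) * x j)‖ := by rw [hmain]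
      _ ≤ ‖x i‖ + ‖(Δt:ℂ) * ∑ j ∈ Su, (A i j : ℂ) * x j‖
            + ‖lam * ((Δt:ℂ) * ∑ j ∈ Sl, (A i j : ℂ) * x j)‖ := norm_add₃_le
      _ ≤ ‖x i‖ + Δt * (∑ j ∈ Su, |A i j|) * ‖x i‖ + ‖lam‖ * (Δt * (∑ j ∈ Sl, |A i j|) * ‖x i‖) := by
          gcongr
          · rw [norm_mul, Complex.norm_real, Real.norm_eq_abs, abs_of_pos hΔt]
            calc Δt * ‖∑ j ∈ Su, (A i j : ℂ) * x j‖
                ≤ Δt * ((∑ j ∈ Su, |A i j|) * ‖x i‖) :=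
                  mul_le_mul_of_nonneg_left (hbound Su) hΔt.le
              _ = Δt * (∑ j ∈ Su, |A i j|) * ‖x i‖ := by ring
          · rw [norm_mul, norm_mul, Complex.norm_real, Real.norm_eq_abs, abs_of_pos hΔt]
            apply mul_le_mul_of_nonneg_left _ (norm_nonneg lam)
            calc Δt * ‖∑ j ∈ Sl, (A i j : ℂ) * x j‖
                ≤ Δt * ((∑ j ∈ Sl, |A i j|) * ‖x i‖) :=
                  mul_le_mul_of_nonneg_left (hbound Sl) hΔt.le
              _ = Δt * (∑ j ∈ Sl, |A i j|) * ‖x i‖ := by ring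
  have hsplit : (∑ j ∈ Sl, |A i j|) + (∑ j ∈ Su, |A i j|)
      = ∑ j ∈ Finset.univ.filter (fun j => j ≠ i), |A i j| := by
    rw [← Finset.sum_filter_add_sum_filter_not (Finset.univ.filter (fun j => j ≠ i))
      (fun j => (j:ℕ) < (i:ℕ))]
    congr 1
    · apply Finset.sum_congr _ (fun _ _ => rfl)
      ext j; simp [hSl, Finset.mem_filter, Fin.ext_iff]; omega
    · apply Finset.sum_congr _ (fun _ _ => rfl)
      ext j; simp [hSu, Finset.mem_filter, Fin.ext_iff]; omega
  have hs1 : (0:ℝ) ≤ ∑ j ∈ Su, |A i j| := Finset.sum_nonneg fun j _ => abs_nonneg _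
  have hs2 : (0:ℝ) ≤ ∑ j ∈ Sl, |A i j| := Finset.sum_nonneg fun j _ => abs_nonneg _
  have hd := hdom i
  rw [← hsplit] at hd
  have hc : (0:ℝ) < ‖lam‖ := lt_of_lt_of_le one_pos hlam
  nlinarith [hineq,
    mul_pos (mul_pos hc (mul_pos hΔt hxi))
      (by linarith : (0:ℝ) < |A i i| - (∑ j ∈ Sl, |A i j|) - (∑ j ∈ Su, |A i j|)),
    mul_nonneg (mul_nonneg (by linarith : (0:ℝ) ≤ ‖lam‖ - 1) hΔt.le)
      (mul_nonneg hs1 hxi.le),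
    mul_nonneg (by linarith : (0:ℝ) ≤ ‖lam‖ - 1) hxi.le]
end

section
/- Let α > 0, Δt > 0. Any real root λ > 0 of the quadratic λ² − (1 + (1 − αΔt²)/(1 + Δt(α+1)))λ + 1/(1 + Δt(α+1)) = 0 satisfies λ < 1. -/
theorem sdc1_positive_real_root_lt_one
    (α Δt : ℝ) (hα : 0 < α) (hΔt : 0 < Δt)
    (lam : ℝ) (hpos : 0 < lam)
    (hroot : lam ^ 2 - (1 + (1 - α * Δt ^ 2) / (1 + Δt * (α + 1))) * lam
        + 1 / (1 + Δt * (α + 1)) = 0) :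
    lam < 1 := by
  have hd : 0 < 1 + Δt * (α + 1) := by positivity
  by_contra h
  push_neg at h
  have hroot' : (1 + Δt * (α + 1)) * lam ^ 2 - ((1 + Δt * (α + 1)) + 1 - α * Δt ^ 2) * lam + 1 = 0 := by
    field_simp at hroot
    nlinarith [hroot]
  nlinarith [mul_nonneg (sub_nonneg.2 h) (sub_nonneg.2 (show (1:ℝ) ≤ (1 + Δt * (α + 1)) * lam by nlinarith)), mul_pos hα (pow_pos hΔt 2), mul_pos (mul_pos hα (pow_pos hΔt 2)) hpos]
end

section
/- For α > 0, both roots of the quadratic λ² − (1 + (1 − αΔt²)/(1 + Δt(α+1)))λ + 1/(1 + Δt(α+1)) = 0 have modulus at most 1 if and only if 0 < Δt ≤ (α + 1 + √((α+1)² + 4α))/α. -/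
/-- If both `p(1) > 0` and `p(-1) ≥ 0` for `p(λ)=λ²-bλ+c` with `0<c<1`,
then every complex root has modulus at most 1. -/
lemma sdc1_aux_root_bound (b c : ℝ) (hc0 : 0 < c) (hc1 : c < 1)
    (hp1 : 0 < 1 - b + c) (hpm : 0 ≤ 1 + b + c) (lam : ℂ)
    (h : lam ^ 2 - (b : ℂ) * lam + (c : ℂ) = 0) : ‖lam‖ ≤ 1 := by
  have hre := congrArg Complex.re h
  have him := congrArg Complex.im h
  set X : ℝ := lam.re with hX
  set Y : ℝ := lam.im with hY
  simp [pow_two, Complex.mul_re, Complex.mul_im, ← hX, ← hY] at hre him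
  have hgoal : X ^ 2 + Y ^ 2 ≤ 1 → ‖lam‖ ≤ 1 := by
    intro hxy
    have h1 : ‖lam‖ = Real.sqrt (X ^ 2 + Y ^ 2) := by
      rw [Complex.norm_def, Complex.normSq_apply, ← hX, ← hY]; ring_nf
    rw [h1]
    calc Real.sqrt (X ^ 2 + Y ^ 2) ≤ Real.sqrt 1 := Real.sqrt_le_sqrt hxy
      _ = 1 := Real.sqrt_one
  apply hgoal
  by_cases hY0 : Y = 0
  · rw [hY0] at hre ⊢
    have hroot : X ^ 2 - b * X + c = 0 := by nlinarith [hre]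
    rcases le_or_gt X 0 with hX0 | hX0
    · by_contra hgt
      push_neg at hgt
      have hXlt : X < -1 := by nlinarith
      nlinarith [hpm, hroot, hc1,
        mul_pos (by linarith : (0:ℝ) < -1 - X) (by linarith : (0:ℝ) < -X)]
    · by_contra hgt
      push_neg at hgt
      have hXgt : 1 < X := by nlinarith
      nlinarith [hp1, hroot, hc1]
  · have hb2 : b = 2 * X := by
      have h0 : Y * (X + X - b) = 0 := by nlinarith [him]
      rcases mul_eq_zero.mp h0 with h' | h'
      · exact absurd h' hY0
      · linarith
    nlinarith [hre, hb2, hc1]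

/-- If `p(-1) < 0` for `p(λ)=λ²-bλ+c` with `0<c`, there is a real root `< -1`. -/
lemma sdc1_aux_unstable (b c : ℝ) (hc0 : 0 < c) (hm : 1 + b + c < 0) :
    ∃ x : ℝ, x < -1 ∧ x ^ 2 - b * x + c = 0 := by
  have hdisc : 0 ≤ b ^ 2 - 4 * c := by
    nlinarith [sq_nonneg (1 - c),
      mul_pos (by linarith : (0:ℝ) < -(b + 1 + c)) (by linarith : (0:ℝ) < (1 + c) - b)]
  have ht2 : Real.sqrt (b ^ 2 - 4 * c) ^ 2 = b ^ 2 - 4 * c := Real.sq_sqrt hdisc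
  have ht : 0 ≤ Real.sqrt (b ^ 2 - 4 * c) := Real.sqrt_nonneg _
  refine ⟨(b - Real.sqrt (b ^ 2 - 4 * c)) / 2, ?_, by nlinarith [ht2]⟩
  have htgt : Real.sqrt (b ^ 2 - 4 * c) ^ 2 > (b + 2) ^ 2 := by nlinarith
  have h2 : b + 2 < Real.sqrt (b ^ 2 - 4 * c) := by nlinarith
  linarith

theorem sdc1_stability_iff_time_step_bound
    (α Δt : ℝ) (hα : 0 < α) (hΔt : 0 < Δt) :
    (∀ lam : ℂ,
        lam ^ 2 - ((1 : ℂ) + ((1 - α * Δt ^ 2) / (1 + Δt * (α + 1)) : ℝ)) * lam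
          + ((1 / (1 + Δt * (α + 1)) : ℝ) : ℂ) = 0 → ‖lam‖ ≤ 1) ↔
      Δt ≤ (α + 1 + Real.sqrt ((α + 1) ^ 2 + 4 * α)) / α := by
  have hD : (0:ℝ) < 1 + Δt * (α + 1) := by nlinarith
  obtain ⟨D, hDdef⟩ : ∃ D : ℝ, D = 1 + Δt * (α + 1) := ⟨_, rfl⟩
  have hDpos : 0 < D := hDdef ▸ hD
  obtain ⟨b, hbdef⟩ : ∃ b : ℝ, b = 1 + (1 - α * Δt ^ 2) / D := ⟨_, rfl⟩
  obtain ⟨c, hcdef⟩ : ∃ c : ℝ, c = 1 / D := ⟨_, rfl⟩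
  have hcoef : ∀ lam : ℂ,
      (lam ^ 2 - ((1 : ℂ) + ((1 - α * Δt ^ 2) / (1 + Δt * (α + 1)) : ℝ)) * lam
        + ((1 / (1 + Δt * (α + 1)) : ℝ) : ℂ))
      = lam ^ 2 - (b : ℂ) * lam + (c : ℂ) := by
    intro lam
    rw [hbdef, hcdef, hDdef]
    push_cast
    ring
  have hs : (0:ℝ) ≤ Real.sqrt ((α + 1) ^ 2 + 4 * α) := Real.sqrt_nonneg _
  obtain ⟨s, hsdef⟩ : ∃ s : ℝ, s = Real.sqrt ((α + 1) ^ 2 + 4 * α) := ⟨_, rfl⟩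
  rw [← hsdef] at hs ⊢
  have hs2 : s ^ 2 = (α + 1) ^ 2 + 4 * α := by
    rw [hsdef]; exact Real.sq_sqrt (by nlinarith)
  have hc0 : 0 < c := by rw [hcdef]; positivity
  have hc1 : c < 1 := by rw [hcdef, div_lt_one hDpos]; nlinarith
  have hp1 : 0 < 1 - b + c := by
    rw [hbdef, hcdef]
    have h1 : 1 - (1 + (1 - α * Δt ^ 2) / D) + 1 / D = (α * Δt ^ 2) / D := by
      field_simp
      ring
    rw [h1]; positivity
  have hiff : Δt ≤ (α + 1 + s) / α ↔ 0 ≤ 1 + b + c := by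
    rw [le_div_iff₀ hα, hbdef, hcdef]
    have key : 1 + (1 + (1 - α * Δt ^ 2) / D) + 1 / D
        = (4 + 2 * (α + 1) * Δt - α * Δt ^ 2) / D := by
      rw [hDdef]; field_simp; ring
    rw [key, le_div_iff₀ hDpos]
    constructor
    · intro h
      nlinarith [hs2, hs, sq_nonneg (Δt * α - (α + 1) - s)]
    · intro h
      nlinarith [hs2, hs, sq_nonneg (Δt * α - (α + 1))]
  rw [hiff]
  constructor
  · intro h
    by_contra hlt
    push_neg at hlt
    obtain ⟨x, hx1, hxroot⟩ := sdc1_aux_unstable b c hc0 hlt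
    have hx := h ((x : ℝ) : ℂ) (by
      rw [hcoef]
      have : ((x:ℂ)) ^ 2 - (b:ℂ) * (x:ℂ) + (c:ℂ) = ((x ^ 2 - b * x + c : ℝ) : ℂ) := by
        push_cast; ring
      rw [this, hxroot, Complex.ofReal_zero])
    rw [Complex.norm_real, Real.norm_eq_abs, abs_le] at hx
    linarith [hx.1]
  · intro hp lam hlam
    rw [hcoef] at hlam
    exact sdc1_aux_root_bound b c hc0 hc1 hp1 hp lam hlam
end

section
/- For every α > 0, (α + 1 + √((α+1)² + 4α))/α > min{2/α, 2}, i.e., the maximum stable time step of the partitioned SDC1 scheme on the model problem u'=Au, A=[[0,1],[−α,−α−1]], strictly exceeds that of the monolithic forward Euler scheme. -/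
theorem sdc1_time_step_exceeds_forward_euler (α : ℝ) (hα : 0 < α) :
    min (2 / α) 2 < (α + 1 + Real.sqrt ((α + 1) ^ 2 + 4 * α)) / α := by
  have hs : α + 1 < Real.sqrt ((α + 1) ^ 2 + 4 * α) := by
    rw [show (α + 1 : ℝ) = Real.sqrt ((α + 1) ^ 2) from (Real.sqrt_sq (by linarith)).symm]
    exact Real.sqrt_lt_sqrt (by positivity) (by nlinarith [Real.sq_sqrt (sq_nonneg (α+1))])
  have h2 : 2 / α + 2 < (α + 1 + Real.sqrt ((α + 1) ^ 2 + 4 * α)) / α := by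
    rw [div_add' _ _ _ hα.ne', div_lt_div_iff_of_pos_right hα]
    linarith
  calc min (2 / α) 2 ≤ 2 / α := min_le_left _ _
    _ < _ := by have := div_pos (by norm_num : (0:ℝ) < 2) hα; linarith
end

section
/- Let A be an n×n complex matrix that is irreducibly diagonally dominant with non-positive diagonal entries, decomposed A = L + D + U into strict lower, diagonal, and strict upper parts. Then for every Δt > 0 and every complex number λ with |λ| ≥ 1, the matrix λ(I − Δt·L − Δt·D) − (I + Δt·U) is invertible; consequently the spectral radius of C = (I − Δt·L − Δt·D)^{-1}(I + Δt·U) is strictly less than 1. -/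
open Finset

lemma idd_isUnit {n : ℕ} (M : Matrix (Fin n) (Fin n) ℂ)
    (hdom : ∀ i, ∑ j ∈ Finset.univ.filter (fun j => j ≠ i), ‖M i j‖ ≤ ‖M i i‖)
    (i₀ : Fin n)
    (hstrict : ∑ j ∈ Finset.univ.filter (fun j => j ≠ i₀), ‖M i₀ j‖ < ‖M i₀ i₀‖)
    (hirr : ∀ i, Relation.ReflTransGen (fun a b => a ≠ b ∧ M a b ≠ 0) i i₀) :
    IsUnit M := by
  rw [Matrix.isUnit_iff_isUnit_det, isUnit_iff_ne_zero]
  intro hdet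
  obtain ⟨x, hx0, hMx⟩ := (Matrix.exists_mulVec_eq_zero_iff).2 hdet
  obtain ⟨i₁, -, hmax⟩ := Finset.exists_max_image (univ : Finset (Fin n))
    (fun i => ‖x i‖) ⟨i₀, mem_univ i₀⟩
  set c := ‖x i₁‖ with hc
  have hmax' : ∀ i, ‖x i‖ ≤ c := fun i => hmax i (mem_univ i)
  have hcpos : 0 < c := by
    obtain ⟨k, hk⟩ := Function.ne_iff.mp hx0
    exact lt_of_lt_of_le (norm_pos_iff.mpr hk) (hmax' k)
  have hdom' : ∀ i, ∑ j ∈ univ.erase i, ‖M i j‖ ≤ ‖M i i‖ := by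
    intro i; rw [← Finset.filter_ne']; exact hdom i
  have hrow : ∀ i, ‖M i i‖ * ‖x i‖ ≤ ∑ j ∈ univ.erase i, ‖M i j‖ * ‖x j‖ := by
    intro i
    have h0 : ∑ j, M i j * x j = 0 := by
      have := congrFun hMx i
      simpa [Matrix.mulVec, dotProduct] using this
    have hsplit : M i i * x i = -∑ j ∈ univ.erase i, M i j * x j := by
      rw [← Finset.add_sum_erase univ (fun j => M i j * x j) (mem_univ i)] at h0
      linear_combination h0
    calc ‖M i i‖ * ‖x i‖ = ‖M i i * x i‖ := (norm_mul _ _).symm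
      _ = ‖∑ j ∈ univ.erase i, M i j * x j‖ := by rw [hsplit, norm_neg]
      _ ≤ ∑ j ∈ univ.erase i, ‖M i j * x j‖ := norm_sum_le _ _
      _ = ∑ j ∈ univ.erase i, ‖M i j‖ * ‖x j‖ := by simp [norm_mul]
  have hprop : ∀ i j, ‖x i‖ = c → j ≠ i → M i j ≠ 0 → ‖x j‖ = c := by
    intro i j hi hji hMij
    by_contra hne
    have hlt : ‖x j‖ < c := lt_of_le_of_ne (hmax' j) hne
    have h1 : ∑ k ∈ univ.erase i, ‖M i k‖ * ‖x k‖ < ∑ k ∈ univ.erase i, ‖M i k‖ * c := by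
      refine Finset.sum_lt_sum (fun k _ => mul_le_mul_of_nonneg_left (hmax' k) (norm_nonneg _))
        ⟨j, Finset.mem_erase.mpr ⟨hji, mem_univ j⟩,
          mul_lt_mul_of_pos_left hlt (norm_pos_iff.mpr hMij)⟩
    have h2 : ∑ k ∈ univ.erase i, ‖M i k‖ * c ≤ ‖M i i‖ * c := by
      rw [← Finset.sum_mul]
      exact mul_le_mul_of_nonneg_right (hdom' i) hcpos.le
    have h3 := hrow i
    rw [hi] at h3
    linarith
  have key : ∀ b, Relation.ReflTransGen (fun a b => a ≠ b ∧ M a b ≠ 0) i₁ b → ‖x b‖ = c := by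
    intro b h
    induction h with
    | refl => rfl
    | tail hab hbc ih => exact hprop _ _ ih hbc.1.symm hbc.2
  have hS : ‖x i₀‖ = c := key i₀ (hirr i₁)
  have h3 := hrow i₀
  rw [hS] at h3
  have h4 : ∑ k ∈ univ.erase i₀, ‖M i₀ k‖ * ‖x k‖ ≤ ∑ k ∈ univ.erase i₀, ‖M i₀ k‖ * c :=
    Finset.sum_le_sum (fun k _ => mul_le_mul_of_nonneg_left (hmax' k) (norm_nonneg _))
  have h5 : ∑ k ∈ univ.erase i₀, ‖M i₀ k‖ * c < ‖M i₀ i₀‖ * c := by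
    rw [← Finset.sum_mul]
    refine mul_lt_mul_of_pos_right ?_ hcpos
    rw [← Finset.filter_ne'] at *; exact hstrict
  linarith

lemma transGen_to_reflTransGen {α : Type*} {R R' : α → α → Prop}
    (h : ∀ a b, R a b → a = b ∨ R' a b) {i j : α}
    (ht : Relation.TransGen R i j) : Relation.ReflTransGen R' i j := by
  induction ht with
  | single hr => rcases h _ _ hr with rfl | h'
                 exacts [.refl, .single h']
  | tail _ hr ih => rcases h _ _ hr with rfl | h'
                    exacts [ih, ih.tail h']

theorem sdc1_irreducibly_diagonally_dominant_stability
    (n : ℕ) (A : Matrix (Fin n) (Fin n) ℂ)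
    (hdiag : ∀ i, (A i i).re ≤ 0 ∧ (A i i).im = 0)
    (hdom : ∀ i, ∑ j ∈ Finset.univ.filter (fun j => j ≠ i), ‖A i j‖ ≤ ‖A i i‖)
    (hstrict : ∃ i, ∑ j ∈ Finset.univ.filter (fun j => j ≠ i), ‖A i j‖ < ‖A i i‖)
    (hirr : ∀ i j : Fin n, Relation.TransGen (fun a b : Fin n => A a b ≠ 0) i j)
    (L D U : Matrix (Fin n) (Fin n) ℂ)
    (hL : ∀ i j, L i j = if (j : ℕ) < (i : ℕ) then A i j else 0)
    (hD : ∀ i j, D i j = if j = i then A i j else 0)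
    (hU : ∀ i j, U i j = if (i : ℕ) < (j : ℕ) then A i j else 0)
    (Δt : ℝ) (hΔt : 0 < Δt) :
    (∀ lam : ℂ, 1 ≤ ‖lam‖ →
      IsUnit (lam • ((1 : Matrix (Fin n) (Fin n) ℂ) - (Δt : ℂ) • L - (Δt : ℂ) • D)
        - ((1 : Matrix (Fin n) (Fin n) ℂ) + (Δt : ℂ) • U))) ∧
    (∀ μ ∈ spectrum ℂ
        (((1 : Matrix (Fin n) (Fin n) ℂ) - (Δt : ℂ) • L - (Δt : ℂ) • D)⁻¹ *
          ((1 : Matrix (Fin n) (Fin n) ℂ) + (Δt : ℂ) • U)),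
      ‖μ‖ < 1) := by
  obtain ⟨i₀, hstrict₀⟩ := hstrict
  set B : Matrix (Fin n) (Fin n) ℂ :=
    (1 : Matrix (Fin n) (Fin n) ℂ) - (Δt : ℂ) • L - (Δt : ℂ) • D with hB
  set V : Matrix (Fin n) (Fin n) ℂ :=
    (1 : Matrix (Fin n) (Fin n) ℂ) + (Δt : ℂ) • U with hV
  have hAdiag : ∀ i, A i i = (((A i i).re : ℝ) : ℂ) := fun i =>
    Complex.ext rfl (by simp [(hdiag i).2])
  have hnormdiag : ∀ i, ‖A i i‖ = -(A i i).re := by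
    intro i
    conv_lhs => rw [hAdiag i]
    rw [Complex.norm_real, Real.norm_eq_abs, abs_of_nonpos (hdiag i).1]
  -- Part 1
  have part1 : ∀ lam : ℂ, 1 ≤ ‖lam‖ → IsUnit (lam • B - V) := by
    intro lam hlam
    have hlam0 : lam ≠ 0 := by
      intro h; rw [h, norm_zero] at hlam; linarith
    set M : Matrix (Fin n) (Fin n) ℂ := lam • B - V with hM
    have hMd : ∀ i, M i i = lam * (1 - (Δt : ℂ) * A i i) - 1 := by
      intro i
      simp [hM, hB, hV, Matrix.sub_apply, Matrix.add_apply, Matrix.smul_apply,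
        Matrix.one_apply, hL, hD, hU]
    have hMo : ∀ i j, j ≠ i →
        M i j = -(lam * (Δt : ℂ) * A i j) ∨ M i j = -((Δt : ℂ) * A i j) := by
      intro i j hji
      have hji' : (j : ℕ) ≠ (i : ℕ) := fun h => hji (Fin.ext h)
      rcases lt_or_gt_of_ne hji' with h | h
      · left
        simp [hM, hB, hV, Matrix.sub_apply, Matrix.add_apply, Matrix.smul_apply,
          Matrix.one_apply, hL, hD, hU, hji, h, not_lt_of_gt h, Ne.symm hji]
        ring
      · right
        simp [hM, hB, hV, Matrix.sub_apply, Matrix.add_apply, Matrix.smul_apply,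
          Matrix.one_apply, hL, hD, hU, hji, h, not_lt_of_gt h, Ne.symm hji]
    have hMobd : ∀ i j, j ≠ i → ‖M i j‖ ≤ ‖lam‖ * Δt * ‖A i j‖ := by
      intro i j hji
      rcases hMo i j hji with h | h <;> rw [h, norm_neg]
      · rw [norm_mul, norm_mul, Complex.norm_real, Real.norm_eq_abs, abs_of_pos hΔt]
      · rw [norm_mul, Complex.norm_real, Real.norm_eq_abs, abs_of_pos hΔt]
        nlinarith [mul_nonneg (mul_nonneg (sub_nonneg.mpr hlam) hΔt.le) (norm_nonneg (A i j))]
    have hMone : ∀ i j, j ≠ i → A i j ≠ 0 → M i j ≠ 0 := by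
      intro i j hji hA
      have hΔt0 : ((Δt : ℝ) : ℂ) ≠ 0 := by
        exact_mod_cast (ne_of_gt hΔt)
      rcases hMo i j hji with h | h <;> rw [h]
      · exact neg_ne_zero.mpr (mul_ne_zero (mul_ne_zero hlam0 hΔt0) hA)
      · exact neg_ne_zero.mpr (mul_ne_zero hΔt0 hA)
    have hMdlb : ∀ i, ‖lam‖ * Δt * ‖A i i‖ + (‖lam‖ - 1) ≤ ‖M i i‖ := by
      intro i
      rw [hMd i]
      have h1 : (1 : ℂ) - (Δt : ℂ) * A i i = (((1 - Δt * (A i i).re : ℝ)) : ℂ) := by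
        conv_lhs => rw [hAdiag i]
        push_cast; ring
      have h2 : ‖(1 : ℂ) - (Δt : ℂ) * A i i‖ = 1 + Δt * ‖A i i‖ := by
        rw [h1, Complex.norm_real, Real.norm_eq_abs, hnormdiag i, abs_of_pos]
        · ring
        · nlinarith [(hdiag i).1]
      have h3 := norm_sub_norm_le (lam * (1 - (Δt : ℂ) * A i i)) 1
      rw [norm_mul, h2, norm_one] at h3
      nlinarith [norm_nonneg (A i i)]
    have hsum : ∀ i, ∑ j ∈ Finset.univ.filter (fun j => j ≠ i), ‖M i j‖ ≤
        ‖lam‖ * Δt * ∑ j ∈ Finset.univ.filter (fun j => j ≠ i), ‖A i j‖ := by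
      intro i
      rw [Finset.mul_sum]
      exact Finset.sum_le_sum fun j hj =>
        hMobd i j (Finset.mem_filter.mp hj).2
    have hlΔ : 0 < ‖lam‖ * Δt := by positivity
    refine idd_isUnit M ?_ i₀ ?_ ?_
    · intro i
      have h1 := hsum i
      have h2 := mul_le_mul_of_nonneg_left (hdom i) hlΔ.le
      have h3 := hMdlb i
      linarith
    · have h1 := hsum i₀
      have h2 := mul_lt_mul_of_pos_left hstrict₀ hlΔ
      have h3 := hMdlb i₀
      linarith
    · intro i
      refine transGen_to_reflTransGen ?_ (hirr i i₀)
      intro a b hab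
      by_cases h : a = b
      · exact Or.inl h
      · exact Or.inr ⟨h, hMone a b (Ne.symm h) hab⟩
  refine ⟨part1, ?_⟩
  -- B is invertible (lower triangular with nonzero diagonal)
  have hBd : ∀ i, B i i = (((1 - Δt * (A i i).re : ℝ)) : ℂ) := by
    intro i
    have h : B i i = 1 - (Δt : ℂ) * A i i := by
      simp [hB, Matrix.sub_apply, Matrix.smul_apply, Matrix.one_apply, hL, hD]
    rw [h]
    conv_lhs => rw [hAdiag i]
    push_cast; ring
  have hBd0 : ∀ i, B i i ≠ 0 := by
    intro i
    rw [hBd i]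
    have : (0 : ℝ) < 1 - Δt * (A i i).re := by nlinarith [(hdiag i).1]
    exact_mod_cast ne_of_gt this
  have hBtri : B.BlockTriangular OrderDual.toDual := by
    intro i j hij
    have h : (i : ℕ) < (j : ℕ) := hij
    simp [hB, Matrix.sub_apply, Matrix.smul_apply, Matrix.one_apply, hL, hD,
      Fin.ne_of_lt (show i < j from h), not_lt_of_gt h,
      (Fin.ne_of_lt (show i < j from h)).symm]
  have hdetB : IsUnit B.det := by
    rw [Matrix.det_of_lowerTriangular B hBtri, isUnit_iff_ne_zero]
    exact Finset.prod_ne_zero_iff.mpr fun i _ => hBd0 i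
  have hBinv_unit : IsUnit B⁻¹ :=
    ⟨⟨B⁻¹, B, Matrix.nonsing_inv_mul B hdetB, Matrix.mul_nonsing_inv B hdetB⟩, rfl⟩
  intro μ hμ
  by_contra hcon
  push_neg at hcon
  have hMunit := part1 μ hcon
  have key : μ • (1 : Matrix (Fin n) (Fin n) ℂ) - B⁻¹ * V = B⁻¹ * (μ • B - V) := by
    rw [Matrix.mul_sub, Matrix.mul_smul, Matrix.nonsing_inv_mul B hdetB]
  have hunit : IsUnit (μ • (1 : Matrix (Fin n) (Fin n) ℂ) - B⁻¹ * V) := by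
    rw [key]; exact hBinv_unit.mul hMunit
  rw [spectrum.mem_iff] at hμ
  apply hμ
  rwa [Algebra.algebraMap_eq_smul_one]
end
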